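/- Suppose F : ℝ^d → ℝ is twice differentiable with ‖∇²F(x) - ∇²F(x_t)‖ ≤ L‖x - x_t‖ for all x on the segment [x_t, x_t + s_t], and the inexact Hessian H_t satisfies ‖(H_t - ∇²F(x_t)) s_t‖ ≤ ε‖s_t‖. Let m_t(s) = ⟨∇F(x_t), s⟩ + (1/2)⟨s, H_t s⟩ and suppose ‖s_t‖ ≤ Δ_t. Then |F(x_t + s_t) - F(x_t) - m_t(s_t)| ≤ (L/2)Δ_t³ + (ε/2)Δ_t². -/

import Mathlib

open scoped InnerProductSpace

set_option maxHeartbeats 1000000 in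
/-- Discrepancy between the quadratic trust-region model with inexact Hessian and the
true objective. -/
theorem model_discrepancy_TR {d : ℕ}
    (F : EuclideanSpace ℝ (Fin d) → ℝ)
    (Hess : EuclideanSpace ℝ (Fin d) →
      (EuclideanSpace ℝ (Fin d) →L[ℝ] EuclideanSpace ℝ (Fin d)))
    (hF1 : ∀ x, HasGradientAt F (gradient F x) x)
    (hF2 : ∀ x, HasFDerivAt (gradient F) (Hess x) x)
    (xt st : EuclideanSpace ℝ (Fin d)) (L ε Δ : ℝ)
    (hL : 0 < L) (hε : 0 < ε) (hΔ : 0 < Δ)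
    (hLip : ∀ x ∈ segment ℝ xt (xt + st), ‖Hess x - Hess xt‖ ≤ L * ‖x - xt‖)
    (Ht : EuclideanSpace ℝ (Fin d) →L[ℝ] EuclideanSpace ℝ (Fin d))
    (hHt : ‖(Ht - Hess xt) st‖ ≤ ε * ‖st‖)
    (hsΔ : ‖st‖ ≤ Δ)
    (m : EuclideanSpace ℝ (Fin d) → ℝ)
    (hm : ∀ s, m s = ⟪gradient F xt, s⟫_ℝ + (1 / 2) * ⟪s, Ht s⟫_ℝ) :
    |F (xt + st) - F xt - m st| ≤ L / 2 * Δ ^ 3 + ε / 2 * Δ ^ 2 := by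
  set g := gradient F xt with hg
  set A : ℝ := ⟪g, st⟫_ℝ with hA
  set B : ℝ := ⟪st, Hess xt st⟫_ℝ with hB
  -- curve
  set c : ℝ → EuclideanSpace ℝ (Fin d) := fun t => xt + t • st with hc
  have hcderiv : ∀ t : ℝ, HasDerivAt c st t := by
    intro t
    simpa [hc] using ((hasDerivAt_id t).smul_const st).const_add xt
  have hcmem : ∀ t ∈ Set.Icc (0:ℝ) 1, c t ∈ segment ℝ xt (xt + st) := by
    intro t ht
    refine ⟨1 - t, t, by linarith [ht.2], ht.1, by ring, ?_⟩
    simp only [hc, smul_add]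
    module
  -- gradient bound along the segment
  have hgradbound : ∀ t ∈ Set.Icc (0:ℝ) 1,
      ‖gradient F (c t) - g - t • (Hess xt st)‖ ≤ L * t ^ 2 * ‖st‖ ^ 2 := by
    intro t ht
    have hsub : segment ℝ xt (c t) ⊆ segment ℝ xt (xt + st) := by
      have hmem : c t ∈ segment ℝ xt (xt + st) := hcmem t ht
      have h0 : xt ∈ segment ℝ xt (xt + st) := left_mem_segment ℝ _ _
      exact (convex_segment xt (xt + st)).segment_subset h0 hmem
    have key : ‖gradient F (c t) - gradient F xt - (Hess xt) (c t - xt)‖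
        ≤ (L * ‖c t - xt‖) * ‖c t - xt‖ := by
      refine Convex.norm_image_sub_le_of_norm_hasFDerivWithin_le'
        (f := gradient F) (f' := Hess) (φ := Hess xt)
        (fun x _ => (hF2 x).hasFDerivWithinAt) ?_ (convex_segment _ _)
        (left_mem_segment ℝ _ _) (right_mem_segment ℝ _ _)
      intro x hx
      have h1 : ‖Hess x - Hess xt‖ ≤ L * ‖x - xt‖ := hLip x (hsub hx)
      have h2 : ‖x - xt‖ ≤ ‖c t - xt‖ := by
        obtain ⟨a, b, ha, hb, hab, rfl⟩ := hx
        have heq : a • xt + b • c t - xt = b • (c t - xt) := by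
          have ha' : a = 1 - b := by linarith
          subst ha'
          module
        rw [heq, norm_smul, Real.norm_eq_abs, abs_of_nonneg hb]
        nlinarith [norm_nonneg (c t - xt)]
      calc ‖Hess x - Hess xt‖ ≤ L * ‖x - xt‖ := h1
        _ ≤ L * ‖c t - xt‖ := by nlinarith
    have hct : c t - xt = t • st := by simp [hc]
    have hnct : ‖c t - xt‖ = t * ‖st‖ := by
      rw [hct, norm_smul, Real.norm_eq_abs, abs_of_nonneg ht.1]
    have hmap : (Hess xt) (c t - xt) = t • (Hess xt st) := by
      rw [hct]; exact (Hess xt).map_smul t st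
    calc ‖gradient F (c t) - g - t • (Hess xt st)‖
        = ‖gradient F (c t) - gradient F xt - (Hess xt) (c t - xt)‖ := by rw [hmap, hg]
      _ ≤ (L * ‖c t - xt‖) * ‖c t - xt‖ := key
      _ = L * t ^ 2 * ‖st‖ ^ 2 := by rw [hnct]; ring
  -- ψ and its derivative
  set ψ : ℝ → ℝ := fun t => F (c t) - t * A - t ^ 2 / 2 * B with hψ
  set ψ' : ℝ → ℝ := fun t => ⟪gradient F (c t), st⟫_ℝ - A - t * B with hψ'
  have hψderiv : ∀ t : ℝ, HasDerivAt ψ (ψ' t) t := by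
    intro t
    have h1 : HasDerivAt (fun t => F (c t)) (⟪gradient F (c t), st⟫_ℝ) t := by
      have := ((hF1 (c t)).hasFDerivAt).comp_hasDerivAt t (hcderiv t)
      exact this
    have h2 : HasDerivAt (fun t : ℝ => t * A) A t := by
      simpa using (hasDerivAt_id t).mul_const A
    have h3 : HasDerivAt (fun t : ℝ => t ^ 2 / 2 * B) (t * B) t := by
      have h := ((hasDerivAt_pow 2 t).div_const 2).mul_const B
      have he : (↑2 * t ^ (2 - 1) / 2) * B = t * B := by norm_num
      rw [← he]
      exact h
    exact (h1.sub h2).sub h3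
  -- continuity of ψ'
  have hgraddiff : Differentiable ℝ (gradient F) := fun x => (hF2 x).differentiableAt
  have hgradcont : Continuous (gradient F) := hgraddiff.continuous
  have hccont : Continuous c := by
    apply continuous_const.add
    exact continuous_id.smul continuous_const
  have hψ'cont : Continuous ψ' := by
    apply Continuous.sub
    apply Continuous.sub
    · exact (hgradcont.comp hccont).inner continuous_const
    · exact continuous_const
    · exact continuous_id.mul continuous_const
  -- FTC
  have hftc : ∫ t in (0:ℝ)..1, ψ' t = ψ 1 - ψ 0 :=
    intervalIntegral.integral_eq_sub_of_hasDerivAt (fun t _ => hψderiv t)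
      (hψ'cont.intervalIntegrable 0 1)
  -- pointwise bound on ψ'
  have hψ'bound : ∀ t ∈ Set.Icc (0:ℝ) 1, |ψ' t| ≤ L * ‖st‖ ^ 3 * t ^ 2 := by
    intro t ht
    have heq : ψ' t = ⟪gradient F (c t) - g - t • (Hess xt st), st⟫_ℝ := by
      rw [inner_sub_left, inner_sub_left, real_inner_smul_left, hψ']
      have : ⟪Hess xt st, st⟫_ℝ = B := real_inner_comm _ _
      rw [this, hA]
      try ring
    rw [heq]
    calc |⟪gradient F (c t) - g - t • (Hess xt st), st⟫_ℝ|
        ≤ ‖gradient F (c t) - g - t • (Hess xt st)‖ * ‖st‖ := abs_real_inner_le_norm _ _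
      _ ≤ (L * t ^ 2 * ‖st‖ ^ 2) * ‖st‖ := by
          have := hgradbound t ht
          nlinarith [norm_nonneg st]
      _ = L * ‖st‖ ^ 3 * t ^ 2 := by ring
  -- integral bound
  have hintbound : |∫ t in (0:ℝ)..1, ψ' t| ≤ |∫ t in (0:ℝ)..1, L * ‖st‖ ^ 3 * t ^ 2| := by
    rw [show |∫ t in (0:ℝ)..1, ψ' t| = ‖∫ t in (0:ℝ)..1, ψ' t‖ from (Real.norm_eq_abs _).symm]
    apply intervalIntegral.norm_integral_le_abs_of_norm_le
    · filter_upwards [MeasureTheory.ae_restrict_mem measurableSet_Ioc] with t ht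
      have ht' : t ∈ Set.Icc (0:ℝ) 1 := by
        rw [Set.uIoc_of_le (by norm_num : (0:ℝ) ≤ 1)] at ht
        exact ⟨le_of_lt ht.1, ht.2⟩
      simpa using hψ'bound t ht'
    · exact (by fun_prop : Continuous fun t : ℝ => L * ‖st‖ ^ 3 * t ^ 2).intervalIntegrable 0 1
  have hintval : ∫ t in (0:ℝ)..1, L * ‖st‖ ^ 3 * t ^ 2 = L * ‖st‖ ^ 3 / 3 := by
    rw [intervalIntegral.integral_const_mul, integral_pow]
    norm_num
    ring
  -- evaluate ψ 1 - ψ 0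
  have hψval : ψ 1 - ψ 0 = F (xt + st) - F xt - A - B / 2 := by
    have h1 : c 1 = xt + st := by simp [hc]
    have h0 : c 0 = xt := by simp [hc]
    simp only [hψ, h1, h0]
    ring
  have htaylor : |F (xt + st) - F xt - A - B / 2| ≤ L * ‖st‖ ^ 3 / 3 := by
    rw [← hψval, ← hftc]
    calc |∫ t in (0:ℝ)..1, ψ' t| ≤ |∫ t in (0:ℝ)..1, L * ‖st‖ ^ 3 * t ^ 2| := hintbound
      _ = L * ‖st‖ ^ 3 / 3 := by
          rw [hintval, abs_of_nonneg]
          positivity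
  -- model error term
  have hmodel : |⟪st, Ht st⟫_ℝ - B| ≤ ε * ‖st‖ ^ 2 := by
    have heq : ⟪st, Ht st⟫_ℝ - B = ⟪st, (Ht - Hess xt) st⟫_ℝ := by
      rw [hB, ContinuousLinearMap.sub_apply, inner_sub_right]
    rw [heq]
    calc |⟪st, (Ht - Hess xt) st⟫_ℝ| ≤ ‖st‖ * ‖(Ht - Hess xt) st‖ := abs_real_inner_le_norm _ _
      _ ≤ ‖st‖ * (ε * ‖st‖) := by nlinarith [norm_nonneg st]
      _ = ε * ‖st‖ ^ 2 := by ring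
  -- conclude
  have hms : m st = A + 1 / 2 * ⟪st, Ht st⟫_ℝ := hm st
  have hdecomp : F (xt + st) - F xt - m st
      = (F (xt + st) - F xt - A - B / 2) - 1 / 2 * (⟪st, Ht st⟫_ℝ - B) := by
    rw [hms]; ring
  rw [hdecomp]
  have hns : (0:ℝ) ≤ ‖st‖ := norm_nonneg st
  have hp3 : ‖st‖ ^ 3 ≤ Δ ^ 3 := pow_le_pow_left₀ hns hsΔ 3
  have hp2 : ‖st‖ ^ 2 ≤ Δ ^ 2 := pow_le_pow_left₀ hns hsΔ 2
  have q3 : L * ‖st‖ ^ 3 ≤ L * Δ ^ 3 := mul_le_mul_of_nonneg_left hp3 hL.le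
  have q2 : ε * ‖st‖ ^ 2 ≤ ε * Δ ^ 2 := mul_le_mul_of_nonneg_left hp2 hε.le
  have hLΔ : 0 ≤ L * Δ ^ 3 := by positivity
  calc |(F (xt + st) - F xt - A - B / 2) - 1 / 2 * (⟪st, Ht st⟫_ℝ - B)|
      ≤ |F (xt + st) - F xt - A - B / 2| + |1 / 2 * (⟪st, Ht st⟫_ℝ - B)| := abs_sub _ _
    _ ≤ L * ‖st‖ ^ 3 / 3 + 1 / 2 * (ε * ‖st‖ ^ 2) := by
        rw [abs_mul]
        have h12 : |(1:ℝ) / 2| = 1 / 2 := by norm_num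
        rw [h12]
        gcongr
    _ ≤ L / 2 * Δ ^ 3 + ε / 2 * Δ ^ 2 := by linarith
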